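/- Let Σ be a finite nonempty type, let f : ℝ → ℝ be a convex function, and let f*(x) = sup_{t∈ℝ} (t·x − f(t)) denote its convex conjugate. Let p and q be probability mass functions on Σ with q(σ) > 0 for every σ, and define the f-divergence D_f(p,q) = Σ_σ q(σ)·f(p(σ)/q(σ)). Then: (i) for every function u : Σ → ℝ such that f*(u(σ)) is finite for every σ, one has D_f(p,q) ≥ Σ_σ u(σ)·p(σ) − Σ_σ f*(u(σ))·q(σ); and (ii) equality holds if and only if for every σ ∈ Σ the number u(σ) is a subgradient of f at p(σ)/q(σ). -/
import Mathlib


/-- The convex conjugate `f*(x) = sup_t (t·x − f(t))`, as a real-valued supremum. -/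
noncomputable def fconj (f : ℝ → ℝ) (x : ℝ) : ℝ := sSup (Set.range fun t => t * x - f t)

/-- `c` is a subgradient of `f` at `t`: `f(s) ≥ f(t) + c·(s − t)` for all `s`. -/
def IsSubgradientAt (f : ℝ → ℝ) (t c : ℝ) : Prop := ∀ s : ℝ, f t + c * (s - t) ≤ f s

lemma fconj_ge (f : ℝ → ℝ) {x : ℝ} (h : BddAbove (Set.range fun t => t * x - f t)) (t : ℝ) :
    t * x - f t ≤ fconj f x := le_csSup h ⟨t, rfl⟩

lemma fconj_eq_iff (f : ℝ → ℝ) {x t : ℝ} (h : BddAbove (Set.range fun s => s * x - f s)) :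
    fconj f x = t * x - f t ↔ IsSubgradientAt f t x := by
  constructor
  · intro he s
    have := fconj_ge f h s
    rw [he] at this
    nlinarith
  · intro hs
    refine le_antisymm (csSup_le (Set.range_nonempty _) ?_) (fconj_ge f h t)
    rintro _ ⟨s, rfl⟩
    have := hs s
    dsimp only
    nlinarith

/-- Dual representation of the f-divergence `D_f(p,q) = Σ_σ q(σ)·f(p(σ)/q(σ))`:
(i) for every `u : S → ℝ` with `f*(u σ)` finite for every `σ`,
`D_f(p,q) ≥ Σ_σ u(σ)·p(σ) − Σ_σ f*(u(σ))·q(σ)`, and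
(ii) equality holds iff for every `σ`, `u σ` is a subgradient of `f` at `p σ / q σ`. -/
theorem stmt_0 {S : Type*} [Fintype S] [Nonempty S]
    (f : ℝ → ℝ) (hf : ConvexOn ℝ Set.univ f)
    (p q : S → ℝ)
    (hp0 : ∀ σ, 0 ≤ p σ) (hp1 : ∑ σ, p σ = 1)
    (hq0 : ∀ σ, 0 < q σ) (hq1 : ∑ σ, q σ = 1)
    (u : S → ℝ)
    (hu : ∀ σ, BddAbove (Set.range fun t => t * u σ - f t)) :
    (∑ σ, q σ * f (p σ / q σ)
        ≥ ∑ σ, u σ * p σ - ∑ σ, fconj f (u σ) * q σ)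
    ∧ ((∑ σ, q σ * f (p σ / q σ)
        = ∑ σ, u σ * p σ - ∑ σ, fconj f (u σ) * q σ)
      ↔ ∀ σ, IsSubgradientAt f (p σ / q σ) (u σ)) := by
  have hpq : ∀ σ, (p σ / q σ) * q σ = p σ := fun σ => div_mul_cancel₀ _ (hq0 σ).ne'
  have key : ∀ σ, u σ * p σ - fconj f (u σ) * q σ ≤ q σ * f (p σ / q σ) := by
    intro σ
    have h := fconj_ge f (hu σ) (p σ / q σ)
    have h2 := mul_le_mul_of_nonneg_right h (hq0 σ).le
    rw [sub_mul, mul_right_comm, hpq σ] at h2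
    linarith [mul_comm (p σ) (u σ), mul_comm (q σ) (f (p σ / q σ))]
  have hsum : ∑ σ, u σ * p σ - ∑ σ, fconj f (u σ) * q σ
      = ∑ σ, (u σ * p σ - fconj f (u σ) * q σ) := by
    rw [Finset.sum_sub_distrib]
  constructor
  · rw [ge_iff_le, hsum]
    exact Finset.sum_le_sum fun σ _ => key σ
  · rw [hsum]
    rw [eq_comm, Finset.sum_eq_sum_iff_of_le (fun σ _ => key σ)]
    constructor
    · intro h σ
      have hσ := h σ (Finset.mem_univ σ)
      rw [← fconj_eq_iff f (hu σ)]
      have hq := (hq0 σ).ne'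
      have := hpq σ
      field_simp at hσ ⊢
      nlinarith
    · intro h σ _
      have he := (fconj_eq_iff f (hu σ)).2 (h σ)
      rw [he, sub_mul, mul_right_comm, hpq σ]
      linarith [mul_comm (p σ) (u σ), mul_comm (q σ) (f (p σ / q σ))]
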